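/- Let 𝓗 be a complex inner product space, let H₁, H₂ : 𝓗 →ₗ[ℂ] 𝓗 be symmetric linear operators, let E : ℝ, and let ψ ∈ 𝓗 be a unit vector with (H₁ + H₂) ψ = E • ψ. Then Var_ψ(H₁) = Var_ψ(H₂). -/

import Mathlib

open Finset

/-- The quantum variance of an observable `O` in the state `ψ`:
`Var_ψ(O) = ‖O ψ‖² − (re⟪ψ, O ψ⟫)²`. -/
noncomputable def qVar {𝓗 : Type*} [NormedAddCommGroup 𝓗] [InnerProductSpace ℂ 𝓗]
    (ψ : 𝓗) (O : 𝓗 →ₗ[ℂ] 𝓗) : ℝ :=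
  ‖O ψ‖ ^ 2 - ((inner ℂ ψ (O ψ) : ℂ).re) ^ 2

/-- Corollary 1, Eq. (26): for an eigenstate of a two-partitioned observable
`H₁ + H₂`, the variances of the two parts coincide. -/
theorem stmt5 {𝓗 : Type*} [NormedAddCommGroup 𝓗] [InnerProductSpace ℂ 𝓗]
    (H₁ H₂ : 𝓗 →ₗ[ℂ] 𝓗) (hH₁ : H₁.IsSymmetric) (hH₂ : H₂.IsSymmetric)
    (E : ℝ) (ψ : 𝓗) (hψ : ‖ψ‖ = 1) (heig : (H₁ + H₂) ψ = (E : ℂ) • ψ) :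
    qVar ψ H₁ = qVar ψ H₂ := by
  have h2 : H₂ ψ = (E : ℂ) • ψ - H₁ ψ := by
    have := heig
    simp only [LinearMap.add_apply] at this
    rw [← this]; abel
  have hnorm : ‖H₂ ψ‖ ^ 2 = ‖(E : ℂ) • ψ‖ ^ 2 - 2 * (inner ℂ ((E:ℂ) • ψ) (H₁ ψ) : ℂ).re + ‖H₁ ψ‖ ^ 2 := by
    rw [h2, @norm_sub_sq ℂ]; rfl
  have hEs : ‖(E : ℂ) • ψ‖ ^ 2 = E ^ 2 := by
    rw [norm_smul, hψ]; simp [sq_abs]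
  have hinn : (inner ℂ ((E:ℂ) • ψ) (H₁ ψ) : ℂ).re = E * (inner ℂ ψ (H₁ ψ) : ℂ).re := by
    rw [inner_smul_left]
    simp [Complex.mul_re]
  have hre2 : (inner ℂ ψ (H₂ ψ) : ℂ).re = E - (inner ℂ ψ (H₁ ψ) : ℂ).re := by
    rw [h2, inner_sub_right, inner_smul_right]
    have : (inner ℂ ψ ψ : ℂ) = 1 := by
      rw [inner_self_eq_norm_sq_to_K, hψ]; norm_num
    simp [this, hψ, Complex.mul_re]
  simp only [qVar, hnorm, hEs, hinn, hre2]
  ring
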